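/- Let a : (0,1] → ℝ be C¹ with a > 0 on (0,1] satisfying x·|a'(x)| ≤ α·a(x) for some α ∈ [0,1), and let ψ ∈ H¹((0,1)) (complex-valued) with ψ(1) = 0 and ∫_0^1 a|ψ'|² dx < ∞. Then the limit ψ(0⁺) exists and satisfies |ψ(0)|² ≤ (1/(a(1)(1−α))) · ∫_0^1 a(x)|ψ'(x)|² dx. -/

import Mathlib

open Real Set MeasureTheory Filter Topology intervalIntegral


lemma stmt6_lower (a a' : ℝ → ℝ) (α : ℝ) (hα0 : 0 ≤ α)
    (hpos : ∀ x ∈ Ioc (0:ℝ) 1, 0 < a x)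
    (haderiv : ∀ x ∈ Ioc (0:ℝ) 1, HasDerivAt a (a' x) x)
    (hbound : ∀ x ∈ Ioc (0:ℝ) 1, x * |a' x| ≤ α * a x) :
    ∀ x ∈ Ioc (0:ℝ) 1, a 1 * x ^ α ≤ a x := by
  intro x hx
  have hx0 : 0 < x := hx.1
  set h : ℝ → ℝ := fun t => a t * t ^ (-α) with hh
  have hsub : Icc x 1 ⊆ Ioc (0:ℝ) 1 := fun t ht => ⟨lt_of_lt_of_le hx0 ht.1, ht.2⟩
  have hanti : AntitoneOn h (Icc x 1) := by
    apply antitoneOn_of_hasDerivWithinAt_nonpos (convex_Icc x 1)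
      (f' := fun t => a' t * t ^ (-α) + a t * (-α * t ^ (-α - 1)))
    · intro t ht
      have ht' := hsub ht
      exact ((haderiv t ht').continuousAt.continuousWithinAt).mul
        ((Real.continuousAt_rpow_const t (-α) (Or.inl (ne_of_gt ht'.1))).continuousWithinAt)
    · intro t ht
      rw [interior_Icc] at ht
      have ht' : t ∈ Ioc (0:ℝ) 1 := ⟨lt_trans hx0 ht.1, le_of_lt ht.2⟩
      exact (((haderiv t ht').mul
        (Real.hasDerivAt_rpow_const (Or.inl (ne_of_gt ht'.1)))).hasDerivWithinAt)
    · intro t ht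
      rw [interior_Icc] at ht
      have ht0 : (0:ℝ) < t := lt_trans hx0 ht.1
      have ht' : t ∈ Ioc (0:ℝ) 1 := ⟨ht0, le_of_lt ht.2⟩
      have hp : (0:ℝ) < t ^ (-α) := Real.rpow_pos_of_pos ht0 _
      have h1 : a' t ≤ α * a t / t := by
        rw [le_div_iff₀ ht0]
        calc a' t * t ≤ |a' t| * t := by
              exact mul_le_mul_of_nonneg_right (le_abs_self _) ht0.le
          _ ≤ α * a t := by rw [mul_comm]; exact hbound t ht'
      have h2 : t ^ (-α - 1) = t ^ (-α) * t⁻¹ := by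
        rw [show -α - 1 = -α + (-1) by ring, Real.rpow_add ht0, Real.rpow_neg_one]
      have h3 : a' t * t ^ (-α) ≤ (α * a t / t) * t ^ (-α) :=
        mul_le_mul_of_nonneg_right h1 hp.le
      have h4 : (α * a t / t) * t ^ (-α) + a t * (-α * (t ^ (-α) * t⁻¹)) = 0 := by
        field_simp
        ring
      rw [h2]; linarith
  have key : h 1 ≤ h x := hanti ⟨le_refl x, hx.2⟩ ⟨hx.2, le_refl 1⟩ hx.2
  have h1v : h 1 = a 1 := by simp [hh]
  have hxp : (0:ℝ) < x ^ α := Real.rpow_pos_of_pos hx0 _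
  have : a 1 * x ^ α ≤ a x * x ^ (-α) * x ^ α := by
    rw [h1v] at key
    exact mul_le_mul_of_nonneg_right key hxp.le
  calc a 1 * x ^ α ≤ a x * x ^ (-α) * x ^ α := this
    _ = a x := by
        rw [mul_assoc, ← Real.rpow_add hx0]
        simp

lemma stmt6_invint (a a' : ℝ → ℝ) (α : ℝ) (hα0 : 0 ≤ α) (hα1 : α < 1)
    (hpos : ∀ x ∈ Ioc (0:ℝ) 1, 0 < a x)
    (haderiv : ∀ x ∈ Ioc (0:ℝ) 1, HasDerivAt a (a' x) x)
    (hbound : ∀ x ∈ Ioc (0:ℝ) 1, x * |a' x| ≤ α * a x) :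
    ∀ τ ∈ Ioo (0:ℝ) 1, ∫ x in Ioc τ 1, (a x)⁻¹ ≤ 1 / (a 1 * (1 - α)) := by
  intro τ hτ
  have hsub : Icc τ 1 ⊆ Ioc (0:ℝ) 1 := fun t ht => ⟨lt_of_lt_of_le hτ.1 ht.1, ht.2⟩
  have hacont : ContinuousOn a (Icc τ 1) := fun t ht =>
    ((haderiv t (hsub ht)).continuousAt.continuousWithinAt)
  have ha1 : 0 < a 1 := hpos 1 ⟨one_pos, le_refl 1⟩
  have hint1 : IntegrableOn (fun x => (a x)⁻¹) (Ioc τ 1) := by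
    apply IntegrableOn.mono_set (t := Icc τ 1) _ Ioc_subset_Icc_self
    exact (hacont.inv₀ (fun t ht => (hpos t (hsub ht)).ne')).integrableOn_compact isCompact_Icc
  have hint2 : IntegrableOn (fun x => (a 1)⁻¹ * x ^ (-α)) (Ioc (0:ℝ) 1) := by
    have := (intervalIntegral.intervalIntegrable_rpow' (a := (0:ℝ)) (b := 1)
      (r := -α) (by linarith)).1
    exact this.const_mul _
  have hmono1 : ∫ x in Ioc τ 1, (a x)⁻¹ ≤ ∫ x in Ioc τ 1, (a 1)⁻¹ * x ^ (-α) := by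
    apply setIntegral_mono_on hint1 (hint2.mono_set (Ioc_subset_Ioc_left hτ.1.le))
      measurableSet_Ioc
    intro x hx
    have hx0 : 0 < x := lt_trans hτ.1 hx.1
    have hax : 0 < a x := hpos x ⟨hx0, hx.2⟩
    have hlow : a 1 * x ^ α ≤ a x := stmt6_lower a a' α hα0 hpos haderiv hbound x ⟨hx0, hx.2⟩
    have hxp : (0:ℝ) < x ^ α := Real.rpow_pos_of_pos hx0 _
    have : (a x)⁻¹ ≤ (a 1 * x ^ α)⁻¹ :=
      inv_anti₀ (by positivity) hlow
    calc (a x)⁻¹ ≤ (a 1 * x ^ α)⁻¹ := this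
      _ = (a 1)⁻¹ * x ^ (-α) := by
          rw [mul_inv, Real.rpow_neg hx0.le]
  have hmono2 : ∫ x in Ioc τ 1, (a 1)⁻¹ * x ^ (-α) ≤ ∫ x in Ioc (0:ℝ) 1, (a 1)⁻¹ * x ^ (-α) := by
    apply setIntegral_mono_set hint2
    · filter_upwards [ae_restrict_mem measurableSet_Ioc] with x hx
      have : (0:ℝ) < x := hx.1
      positivity
    · exact HasSubset.Subset.eventuallyLE (Ioc_subset_Ioc_left hτ.1.le)
  have hval : ∫ x in Ioc (0:ℝ) 1, (a 1)⁻¹ * x ^ (-α) = 1 / (a 1 * (1 - α)) := by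
    rw [← intervalIntegral.integral_of_le zero_le_one, intervalIntegral.integral_const_mul,
      integral_rpow (Or.inl (by linarith))]
    rw [Real.one_rpow, Real.zero_rpow (by linarith)]
    field_simp
    ring
  linarith


/-- Boundary estimate: under (H2), for `ψ ∈ H¹(0,1)` with `ψ(1)=0` and finite
weighted energy, the limit `ψ(0⁺)` exists and
`|ψ(0)|² ≤ (1/(a(1)(1−α)))·∫_0^1 a|ψ'|²`. -/
theorem stmt6 (a a' : ℝ → ℝ) (α : ℝ)
    (hα0 : 0 ≤ α) (hα1 : α < 1)
    (hpos : ∀ x ∈ Ioc (0:ℝ) 1, 0 < a x)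
    (haderiv : ∀ x ∈ Ioc (0:ℝ) 1, HasDerivAt a (a' x) x)
    (hacont : ContinuousOn a' (Ioc (0:ℝ) 1))
    (hbound : ∀ x ∈ Ioc (0:ℝ) 1, x * |a' x| ≤ α * a x)
    (ψ ψ' : ℝ → ℂ)
    (hψ1 : ψ 1 = 0)
    (hderiv : ∀ x ∈ Ioo (0:ℝ) 1, HasDerivAt ψ (ψ' x) x)
    (hψ'int : IntegrableOn ψ' (Ioc (0:ℝ) 1))
    (hrep : ∀ τ ∈ Ioo (0:ℝ) 1, ψ τ = -∫ x in τ..1, ψ' x)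
    (hL2 : IntegrableOn (fun x => a x * ‖ψ' x‖ ^ 2) (Ioc (0:ℝ) 1)) :
    ∃ L : ℂ, Tendsto ψ (𝓝[>] (0:ℝ)) (𝓝 L) ∧
      ‖L‖ ^ 2 ≤ (1 / (a 1 * (1 - α))) * ∫ x in Ioc (0:ℝ) 1, a x * ‖ψ' x‖ ^ 2 := by
  have ha1 : 0 < a 1 := hpos 1 ⟨one_pos, le_refl 1⟩
  set L : ℂ := -∫ x in Ioc (0:ℝ) 1, ψ' x with hL
  -- the representation in terms of set integrals
  have hIcc : IntegrableOn ψ' (Icc (0:ℝ) 1) := by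
    rwa [integrableOn_Icc_iff_integrableOn_Ioc]
  have hrep' : ∀ τ ∈ Ioo (0:ℝ) 1, ψ τ = L + ∫ x in Ioc (0:ℝ) τ, ψ' x := by
    intro τ hτ
    have hsplit : ∫ x in Ioc (0:ℝ) 1, ψ' x
        = (∫ x in Ioc (0:ℝ) τ, ψ' x) + ∫ x in Ioc τ 1, ψ' x := by
      rw [← Ioc_union_Ioc_eq_Ioc hτ.1.le hτ.2.le]
      exact setIntegral_union (Ioc_disjoint_Ioc_of_le le_rfl) measurableSet_Ioc
        (hψ'int.mono_set (Ioc_subset_Ioc_right hτ.2.le))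
        (hψ'int.mono_set (Ioc_subset_Ioc_left hτ.1.le))
    rw [hrep τ hτ, intervalIntegral.integral_of_le hτ.2.le, hL]
    rw [hsplit]
    ring
  -- the limit
  have htend : Tendsto ψ (𝓝[>] (0:ℝ)) (𝓝 L) := by
    have hcont := continuousOn_primitive (f := ψ') (a := (0:ℝ)) (b := 1) (μ := volume) hIcc
    have h0 : ContinuousWithinAt (fun x => ∫ t in Ioc (0:ℝ) x, ψ' t) (Icc (0:ℝ) 1) 0 :=
      hcont 0 ⟨le_refl 0, zero_le_one⟩
    have h0' : Tendsto (fun x => ∫ t in Ioc (0:ℝ) x, ψ' t) (𝓝[>] (0:ℝ))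
        (𝓝 (0:ℂ)) := by
      have : (∫ t in Ioc (0:ℝ) (0:ℝ), ψ' t) = 0 := by simp
      have h1 : Tendsto (fun x => ∫ t in Ioc (0:ℝ) x, ψ' t) (𝓝[Icc (0:ℝ) 1] (0:ℝ))
          (𝓝 (0:ℂ)) := by
        have h := h0.tendsto
        rwa [this] at h
      have h2 : 𝓝[Ioo (0:ℝ) 1] (0:ℝ) ≤ 𝓝[Icc (0:ℝ) 1] (0:ℝ) :=
        nhdsWithin_mono _ Ioo_subset_Icc_self
      rw [← nhdsWithin_Ioo_eq_nhdsGT zero_lt_one]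
      exact h1.mono_left h2
    have heq : ∀ᶠ τ in 𝓝[>] (0:ℝ), ψ τ = L + ∫ x in Ioc (0:ℝ) τ, ψ' x := by
      filter_upwards [Ioo_mem_nhdsGT_of_mem (by constructor <;> norm_num :
        (0:ℝ) ∈ Ico (0:ℝ) 1)] with τ hτ using hrep' τ hτ
    have : Tendsto (fun τ => L + ∫ x in Ioc (0:ℝ) τ, ψ' x) (𝓝[>] (0:ℝ)) (𝓝 (L + 0)) :=
      tendsto_const_nhds.add h0'
    rw [add_zero] at this
    exact Tendsto.congr' (heq.mono fun τ h => h.symm) this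
  refine ⟨L, htend, ?_⟩
  -- nonnegativity of the energy integral
  have hEnonneg : 0 ≤ ∫ x in Ioc (0:ℝ) 1, a x * ‖ψ' x‖ ^ 2 := by
    apply setIntegral_nonneg measurableSet_Ioc
    intro x hx
    have := hpos x hx
    positivity
  -- pointwise bound
  have hb : ∀ τ ∈ Ioo (0:ℝ) 1, ‖ψ τ‖ ^ 2
      ≤ (1 / (a 1 * (1 - α))) * ∫ x in Ioc (0:ℝ) 1, a x * ‖ψ' x‖ ^ 2 := by
    intro τ hτ
    have hsub : Icc τ 1 ⊆ Ioc (0:ℝ) 1 := fun t ht => ⟨lt_of_lt_of_le hτ.1 ht.1, ht.2⟩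
    have hacontOn : ContinuousOn a (Icc τ 1) := fun t ht =>
      ((haderiv t (hsub ht)).continuousAt.continuousWithinAt)
    set μ := volume.restrict (Ioc τ 1) with hμ
    set f : ℝ → ℝ := fun x => Real.sqrt (a x)⁻¹ with hf
    set g : ℝ → ℝ := fun x => Real.sqrt (a x) * ‖ψ' x‖ with hg
    have hψ'τ : IntegrableOn ψ' (Ioc τ 1) := hψ'int.mono_set (Ioc_subset_Ioc_left hτ.1.le)
    have hfm : AEStronglyMeasurable f μ := by
      apply ContinuousOn.aestronglyMeasurable _ measurableSet_Ioc
      apply ContinuousOn.mono _ Ioc_subset_Icc_self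
      exact Real.continuous_sqrt.comp_continuousOn
        (hacontOn.inv₀ (fun t ht => (hpos t (hsub ht)).ne'))
    have hgm : AEStronglyMeasurable g μ := by
      apply AEStronglyMeasurable.mul _ hψ'τ.aestronglyMeasurable.norm
      apply ContinuousOn.aestronglyMeasurable _ measurableSet_Ioc
      apply ContinuousOn.mono _ Ioc_subset_Icc_self
      exact Real.continuous_sqrt.comp_continuousOn hacontOn
    have haeIoc : ∀ᵐ x ∂μ, x ∈ Ioc τ 1 := ae_restrict_mem measurableSet_Ioc
    have hfsq : (fun x => f x ^ 2) =ᵐ[μ] fun x => (a x)⁻¹ := by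
      filter_upwards [haeIoc] with x hx
      have := hpos x ⟨lt_trans hτ.1 hx.1, hx.2⟩
      simp only [hf]
      rw [Real.sq_sqrt (by positivity : (0:ℝ) ≤ (a x)⁻¹)]
    have hgsq : (fun x => g x ^ 2) =ᵐ[μ] fun x => a x * ‖ψ' x‖ ^ 2 := by
      filter_upwards [haeIoc] with x hx
      have := hpos x ⟨lt_trans hτ.1 hx.1, hx.2⟩
      simp only [hg, mul_pow]
      rw [Real.sq_sqrt this.le]
    have hintf : Integrable (fun x => f x ^ 2) μ := by
      apply Integrable.congr _ hfsq.symm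
      apply IntegrableOn.mono_set (t := Icc τ 1) _ Ioc_subset_Icc_self
      exact (hacontOn.inv₀ (fun t ht => (hpos t (hsub ht)).ne')).integrableOn_compact
        isCompact_Icc
    have hintg : Integrable (fun x => g x ^ 2) μ := by
      apply Integrable.congr _ hgsq.symm
      exact hL2.mono_set (Ioc_subset_Ioc_left hτ.1.le)
    have hfL2 : MemLp f (ENNReal.ofReal 2) μ := by
      rw [show ENNReal.ofReal 2 = 2 by norm_num [ENNReal.ofReal_ofNat]]
      exact (memLp_two_iff_integrable_sq hfm).2 hintf
    have hgL2 : MemLp g (ENNReal.ofReal 2) μ := by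
      rw [show ENNReal.ofReal 2 = 2 by norm_num [ENNReal.ofReal_ofNat]]
      exact (memLp_two_iff_integrable_sq hgm).2 hintg
    have hconj : (2:ℝ).HolderConjugate 2 := ⟨by norm_num, by norm_num, by norm_num⟩
    have hCS := MeasureTheory.integral_mul_le_Lp_mul_Lq_of_nonneg hconj
      (f := f) (g := g) (μ := μ)
      (Eventually.of_forall (fun x => Real.sqrt_nonneg _))
      (Eventually.of_forall (fun x => mul_nonneg (Real.sqrt_nonneg _) (norm_nonneg _)))
      hfL2 hgL2
    -- rewrite rpow 2 as pow 2
    have hrw : ∀ h : ℝ → ℝ, (∫ x, h x ^ (2:ℝ) ∂μ) = ∫ x, h x ^ 2 ∂μ := by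
      intro h
      apply MeasureTheory.integral_congr_ae (Eventually.of_forall fun x => ?_)
      rw [show (2:ℝ) = ((2:ℕ):ℝ) by norm_num, Real.rpow_natCast]
    rw [hrw f, hrw g] at hCS
    have hfg : (fun x => f x * g x) =ᵐ[μ] fun x => ‖ψ' x‖ := by
      filter_upwards [haeIoc] with x hx
      have hax := hpos x ⟨lt_trans hτ.1 hx.1, hx.2⟩
      have hs : Real.sqrt (a x) ≠ 0 := ne_of_gt (Real.sqrt_pos.2 hax)
      simp [hf, hg, ← mul_assoc, Real.sqrt_inv, inv_mul_cancel₀ hs]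
    rw [MeasureTheory.integral_congr_ae hfg] at hCS
    -- set A, B
    set A : ℝ := ∫ x, f x ^ 2 ∂μ with hA
    set B : ℝ := ∫ x, g x ^ 2 ∂μ with hB
    have hAeq : A = ∫ x in Ioc τ 1, (a x)⁻¹ := MeasureTheory.integral_congr_ae hfsq
    have hBeq : B = ∫ x in Ioc τ 1, a x * ‖ψ' x‖ ^ 2 := MeasureTheory.integral_congr_ae hgsq
    have hAnn : 0 ≤ A := by
      rw [hAeq]
      apply setIntegral_nonneg measurableSet_Ioc
      intro x hx
      have := hpos x ⟨lt_trans hτ.1 hx.1, hx.2⟩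
      positivity
    have hBnn : 0 ≤ B := by
      rw [hBeq]
      apply setIntegral_nonneg measurableSet_Ioc
      intro x hx
      have := hpos x ⟨lt_trans hτ.1 hx.1, hx.2⟩
      positivity
    -- norm bound
    have hnorm : ‖ψ τ‖ ≤ ∫ x, ‖ψ' x‖ ∂μ := by
      rw [hrep τ hτ, norm_neg, intervalIntegral.integral_of_le hτ.2.le]
      exact norm_integral_le_integral_norm _
    have hInn : 0 ≤ ∫ x, ‖ψ' x‖ ∂μ :=
      integral_nonneg fun x => norm_nonneg _
    have hsq : ‖ψ τ‖ ^ 2 ≤ A * B := by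
      have h1 : ‖ψ τ‖ ^ 2 ≤ (∫ x, ‖ψ' x‖ ∂μ) ^ 2 := by
        apply pow_le_pow_left₀ (norm_nonneg _) hnorm
      have h2 : (∫ x, ‖ψ' x‖ ∂μ) ^ 2 ≤ (A ^ (1/2:ℝ) * B ^ (1/2:ℝ)) ^ 2 :=
        pow_le_pow_left₀ hInn hCS 2
      have h3 : (A ^ (1/2:ℝ) * B ^ (1/2:ℝ)) ^ 2 = A * B := by
        rw [mul_pow, ← Real.rpow_natCast (A ^ (1/2:ℝ)) 2, ← Real.rpow_natCast (B ^ (1/2:ℝ)) 2,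
          ← Real.rpow_mul hAnn, ← Real.rpow_mul hBnn]
        norm_num
      linarith
    -- bound A and B
    have hAle : A ≤ 1 / (a 1 * (1 - α)) := by
      rw [hAeq]
      exact stmt6_invint a a' α hα0 hα1 hpos haderiv hbound τ hτ
    have hBle : B ≤ ∫ x in Ioc (0:ℝ) 1, a x * ‖ψ' x‖ ^ 2 := by
      rw [hBeq]
      apply setIntegral_mono_set hL2
      · filter_upwards [ae_restrict_mem measurableSet_Ioc] with x hx
        have := hpos x hx
        positivity
      · exact HasSubset.Subset.eventuallyLE (Ioc_subset_Ioc_left hτ.1.le)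
    calc ‖ψ τ‖ ^ 2 ≤ A * B := hsq
      _ ≤ (1 / (a 1 * (1 - α))) * ∫ x in Ioc (0:ℝ) 1, a x * ‖ψ' x‖ ^ 2 := by
          apply mul_le_mul hAle hBle hBnn
          have h10 : (0:ℝ) < a 1 * (1 - α) := mul_pos ha1 (by linarith)
          exact le_of_lt (one_div_pos.2 h10)
  -- pass to the limit
  have hψtend : Tendsto (fun τ => ‖ψ τ‖ ^ 2) (𝓝[>] (0:ℝ)) (𝓝 (‖L‖ ^ 2)) :=
    (htend.norm).pow 2
  apply le_of_tendsto hψtend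
  filter_upwards [Ioo_mem_nhdsGT_of_mem (by constructor <;> norm_num :
    (0:ℝ) ∈ Ico (0:ℝ) 1)] with τ hτ using hb τ hτ
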